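/- Unisolvence of the lowest-order 2D Adini 1-form (vertex-continuous BDM) element: Let curl f := (−∂_y f, ∂_x f) and S := {(p,q) ∈ ℝ[x,y]² : deg p ≤ 2 and deg q ≤ 2} + span{curl(x³y), curl(xy³)}, a 14-dimensional space. Suppose u = (u₁,u₂) ∈ S satisfies: u(ε,δ) = (0,0) for all ε,δ ∈ {−1,1}; ∫_{−1}^{1} u₁(ε,t) dt = 0 for ε ∈ {−1,1}; ∫_{−1}^{1} u₂(t,δ) dt = 0 for δ ∈ {−1,1}; and ∫_{[−1,1]²} u₁ = ∫_{[−1,1]²} u₂ = 0. Then u = 0. -/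

import Mathlib

open MvPolynomial

noncomputable section

/-- Polynomials in two variables `x, y` over `ℝ`. -/
abbrev M2 : Type := MvPolynomial (Fin 2) ℝ

def x : M2 := X 0
def y : M2 := X 1

/-- The 2D curl of a scalar polynomial: `curl f = (−∂_y f, ∂_x f)`. -/
def curl2 (f : M2) : Fin 2 → M2 := ![-(pderiv 1 f), pderiv 0 f]

/-- The lowest-order 2D Adini 1-form shape space
`S := [P₂]² + span{curl(x³y), curl(xy³)}` (the degree-2 cubical BDM space). -/
def S1 : Submodule ℝ (Fin 2 → M2) :=
  (Submodule.pi Set.univ fun _ => restrictTotalDegree (Fin 2) ℝ 2) ⊔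
    Submodule.span ℝ {curl2 (x ^ 3 * y), curl2 (x * y ^ 3)}

lemma hpd1 : pderiv 1 (x^3*y) = x^3 := by
  simp [x, y, pderiv_mul, pderiv_pow, pderiv_X_self, pderiv_X_of_ne]

lemma hpd2 : pderiv 0 (x^3*y) = 3*(x^2*y) := by
  simp [x, y, pderiv_mul, pderiv_pow, pderiv_X_self, pderiv_X_of_ne]; ring

lemma hpd3 : pderiv 1 (x*y^3) = 3*(x*y^2) := by
  simp [x, y, pderiv_mul, pderiv_pow, pderiv_X_self, pderiv_X_of_ne]; ring

lemma hpd4 : pderiv 0 (x*y^3) = y^3 := by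
  simp [x, y, pderiv_mul, pderiv_pow, pderiv_X_self, pderiv_X_of_ne]

def mon (i j : ℕ) : Fin 2 →₀ ℕ := Finsupp.single 0 i + Finsupp.single 1 j

lemma mon_apply0 (i j : ℕ) : mon i j 0 = i := by simp [mon, Finsupp.single_apply]
lemma mon_apply1 (i j : ℕ) : mon i j 1 = j := by simp [mon, Finsupp.single_apply]

lemma mon_inj {i j k l : ℕ} : mon i j = mon k l ↔ i = k ∧ j = l := by
  constructor
  · intro h
    exact ⟨by rw [← mon_apply0 i j, h, mon_apply0], by rw [← mon_apply1 i j, h, mon_apply1]⟩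
  · rintro ⟨rfl, rfl⟩; rfl

lemma monomial_eq_mon (a : ℝ) (i j : ℕ) :
    (C a * x ^ i * y ^ j : M2) = monomial (mon i j) a := by
  rw [x, y, X_pow_eq_monomial, X_pow_eq_monomial, mon, C_apply, monomial_mul, monomial_mul]
  simp

lemma quad_rep (p : M2) (hp : p.totalDegree ≤ 2) :
    p = C (coeff (mon 0 0) p) + C (coeff (mon 1 0) p) * x + C (coeff (mon 0 1) p) * y
      + C (coeff (mon 2 0) p) * x^2 + C (coeff (mon 1 1) p) * (x*y)
      + C (coeff (mon 0 2) p) * y^2 := by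
  have rhs : ∀ a0 a1 a2 a3 a4 a5 : ℝ,
      (C a0 + C a1 * x + C a2 * y + C a3 * x^2 + C a4 * (x*y) + C a5 * y^2 : M2)
        = monomial (mon 0 0) a0 + monomial (mon 1 0) a1 + monomial (mon 0 1) a2
          + monomial (mon 2 0) a3 + monomial (mon 1 1) a4 + monomial (mon 0 2) a5 := by
    intro a0 a1 a2 a3 a4 a5
    rw [← monomial_eq_mon, ← monomial_eq_mon, ← monomial_eq_mon, ← monomial_eq_mon,
      ← monomial_eq_mon, ← monomial_eq_mon]
    ring
  rw [rhs]
  ext m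
  have hm : m = mon (m 0) (m 1) := by
    ext i
    fin_cases i
    · simp [mon_apply0]
    · simp [mon_apply1]
  simp only [coeff_add, coeff_monomial]
  by_cases h2 : m 0 + m 1 ≤ 2
  · rw [hm]
    have h0 : m 0 ≤ 2 := by omega
    have h1 : m 1 ≤ 2 := by omega
    interval_cases h : (m 0) <;> interval_cases h' : (m 1) <;>
      simp_all [mon_inj]
  · have hz : coeff m p = 0 := by
      apply coeff_eq_zero_of_totalDegree_lt
      have hs : ∑ i ∈ m.support, m i = m 0 + m 1 := by
        rw [Finset.sum_subset (Finset.subset_univ _)]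
        · exact Fin.sum_univ_two m
        · intro i _ hi; simpa using hi
      rw [hs]; omega
    rw [hz, hm, if_neg (by rw [mon_inj]; omega), if_neg (by rw [mon_inj]; omega),
      if_neg (by rw [mon_inj]; omega), if_neg (by rw [mon_inj]; omega),
      if_neg (by rw [mon_inj]; omega), if_neg (by rw [mon_inj]; omega)]
    norm_num

lemma int_cubic (A B C D : ℝ) :
    (∫ t in (-1 : ℝ)..1, (A + B*t + C*t^2 + D*t^3)) = 2*A + 2/3*C := by
  have h : ∀ u ∈ Set.uIcc (-1 : ℝ) 1,
      HasDerivAt (fun t : ℝ => A*t + B*t^2/2 + C*t^3/3 + D*t^4/4)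
        (A + B*u + C*u^2 + D*u^3) u := by
    intro u _
    have h1 : HasDerivAt (fun t : ℝ => A*t) (A*1) u := (hasDerivAt_id u).const_mul A
    have h2 : HasDerivAt (fun t : ℝ => B*t^2/2) (B*(2*u^1)/2) u :=
      ((hasDerivAt_pow 2 u).const_mul B).div_const 2
    have h3 : HasDerivAt (fun t : ℝ => C*t^3/3) (C*(3*u^2)/3) u :=
      ((hasDerivAt_pow 3 u).const_mul C).div_const 3
    have h4 : HasDerivAt (fun t : ℝ => D*t^4/4) (D*(4*u^3)/4) u :=
      ((hasDerivAt_pow 4 u).const_mul D).div_const 4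
    have := ((h1.add h2).add h3).add h4
    exact this.congr_deriv (by ring)
  rw [intervalIntegral.integral_eq_sub_of_hasDerivAt h
    ((Continuous.intervalIntegrable (by continuity) _ _))]
  norm_num
  ring

lemma int_key (f : ℝ → ℝ) (A B C D : ℝ) (hf : ∀ t, f t = A + B*t + C*t^2 + D*t^3) :
    (∫ t in (-1 : ℝ)..1, f t) = 2*A + 2/3*C := by
  rw [intervalIntegral.integral_congr (g := fun t => A + B*t + C*t^2 + D*t^3)
    (fun t _ => hf t)]
  exact int_cubic A B C D

/-- Unisolvence of the lowest-order 2D Adini 1-form (vertex-continuous BDM)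
element: a field in `S` with vanishing vertex values, vanishing zeroth normal
moments on all four edges, and vanishing interior integrals of both
components is zero. -/
theorem adini_1form_unisolvent (u : Fin 2 → M2) (hu : u ∈ S1)
    (hvert : ∀ ε ∈ ({-1, 1} : Set ℝ), ∀ δ ∈ ({-1, 1} : Set ℝ), ∀ i : Fin 2,
      eval ![ε, δ] (u i) = 0)
    (hedgex : ∀ ε ∈ ({-1, 1} : Set ℝ),
      (∫ t in (-1 : ℝ)..1, eval ![ε, t] (u 0)) = 0)
    (hedgey : ∀ δ ∈ ({-1, 1} : Set ℝ),
      (∫ t in (-1 : ℝ)..1, eval ![t, δ] (u 1)) = 0)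
    (hint0 : (∫ s in (-1 : ℝ)..1, ∫ t in (-1 : ℝ)..1, eval ![s, t] (u 0)) = 0)
    (hint1 : (∫ s in (-1 : ℝ)..1, ∫ t in (-1 : ℝ)..1, eval ![s, t] (u 1)) = 0) :
    u = 0 := by
  obtain ⟨v, hv, w, hw, rfl⟩ := Submodule.mem_sup.mp hu
  rw [Submodule.mem_span_pair] at hw
  obtain ⟨a, b, rfl⟩ := hw
  rw [Submodule.mem_pi] at hv
  have hv0 : (v 0).totalDegree ≤ 2 := by
    have := hv 0 trivial; rwa [mem_restrictTotalDegree] at this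
  have hv1 : (v 1).totalDegree ≤ 2 := by
    have := hv 1 trivial; rwa [mem_restrictTotalDegree] at this
  set c00 := coeff (mon 0 0) (v 0); set c10 := coeff (mon 1 0) (v 0)
  set c01 := coeff (mon 0 1) (v 0); set c20 := coeff (mon 2 0) (v 0)
  set c11 := coeff (mon 1 1) (v 0); set c02 := coeff (mon 0 2) (v 0)
  set d00 := coeff (mon 0 0) (v 1); set d10 := coeff (mon 1 0) (v 1)
  set d01 := coeff (mon 0 1) (v 1); set d20 := coeff (mon 2 0) (v 1)
  set d11 := coeff (mon 1 1) (v 1); set d02 := coeff (mon 0 2) (v 1)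
  have hq0 : v 0 = C c00 + C c10 * x + C c01 * y + C c20 * x^2 + C c11 * (x*y) + C c02 * y^2 :=
    quad_rep (v 0) hv0
  have hq1 : v 1 = C d00 + C d10 * x + C d01 * y + C d20 * x^2 + C d11 * (x*y) + C d02 * y^2 :=
    quad_rep (v 1) hv1
  have hc10 : curl2 (x^3*y) 0 = -(x^3) := by
    rw [curl2]; simp only [Matrix.cons_val_zero]; rw [hpd1]
  have hc20 : curl2 (x*y^3) 0 = -(3*(x*y^2)) := by
    rw [curl2]; simp only [Matrix.cons_val_zero]; rw [hpd3]
  have hc11 : curl2 (x^3*y) 1 = 3*(x^2*y) := by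
    rw [curl2]; simp only [Matrix.cons_val_one, Matrix.head_cons, Matrix.cons_val_zero]; rw [hpd2]
  have hc21 : curl2 (x*y^3) 1 = y^3 := by
    rw [curl2]; simp only [Matrix.cons_val_one, Matrix.head_cons, Matrix.cons_val_zero]; rw [hpd4]
  have hcomp0 : (v + (a • curl2 (x^3*y) + b • curl2 (x*y^3))) 0
      = v 0 + (C a * (-(x^3)) + C b * (-(3*(x*y^2)))) := by
    rw [Pi.add_apply, Pi.add_apply, Pi.smul_apply, Pi.smul_apply, hc10, hc20,
      smul_eq_C_mul, smul_eq_C_mul]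
  have hcomp1 : (v + (a • curl2 (x^3*y) + b • curl2 (x*y^3))) 1
      = v 1 + (C a * (3*(x^2*y)) + C b * (y^3)) := by
    rw [Pi.add_apply, Pi.add_apply, Pi.smul_apply, Pi.smul_apply, hc11, hc21,
      smul_eq_C_mul, smul_eq_C_mul]
  have hval0 : ∀ s t : ℝ, eval ![s, t] ((v + (a • curl2 (x^3*y) + b • curl2 (x*y^3))) 0)
      = c00 + c10*s + c01*t + c20*s^2 + c11*(s*t) + c02*t^2 - a*s^3 - 3*b*(s*t^2) := by
    intro s t
    rw [hcomp0, hq0]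
    simp [x, y]
    ring
  have hval1 : ∀ s t : ℝ, eval ![s, t] ((v + (a • curl2 (x^3*y) + b • curl2 (x*y^3))) 1)
      = d00 + d10*s + d01*t + d20*s^2 + d11*(s*t) + d02*t^2 + 3*a*(s^2*t) + b*t^3 := by
    intro s t
    rw [hcomp1, hq1]
    simp [x, y]
    ring
  -- vertex equations
  have V1 := hvert (-1) (by norm_num) (-1) (by norm_num) 0
  have V2 := hvert (-1) (by norm_num) 1 (by norm_num) 0
  have V3 := hvert 1 (by norm_num) (-1) (by norm_num) 0
  have V4 := hvert 1 (by norm_num) 1 (by norm_num) 0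
  have W1 := hvert (-1) (by norm_num) (-1) (by norm_num) 1
  have W2 := hvert (-1) (by norm_num) 1 (by norm_num) 1
  have W3 := hvert 1 (by norm_num) (-1) (by norm_num) 1
  have W4 := hvert 1 (by norm_num) 1 (by norm_num) 1
  rw [hval0] at V1 V2 V3 V4
  rw [hval1] at W1 W2 W3 W4
  -- edge equations
  have E1 := hedgex (-1) (by norm_num)
  have E2 := hedgex 1 (by norm_num)
  rw [int_key _ (c00 + c10*(-1) + c20 - a*(-1)) (c01 + c11*(-1)) (c02 - 3*b*(-1)) 0
    (fun t => by rw [hval0]; ring)] at E1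
  rw [int_key _ (c00 + c10*1 + c20 - a*1) (c01 + c11*1) (c02 - 3*b*1) 0
    (fun t => by rw [hval0]; ring)] at E2
  have F1 := hedgey (-1) (by norm_num)
  have F2 := hedgey 1 (by norm_num)
  rw [int_key _ (d00 + d01*(-1) + d02 + b*(-1)) (d10 + d11*(-1)) (d20 + 3*a*(-1)) 0
    (fun t => by rw [hval1]; ring)] at F1
  rw [int_key _ (d00 + d01*1 + d02 + b*1) (d10 + d11*1) (d20 + 3*a*1) 0
    (fun t => by rw [hval1]; ring)] at F2
  -- interior equations
  have inner0 : ∀ s : ℝ, (∫ t in (-1 : ℝ)..1,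
      eval ![s, t] ((v + (a • curl2 (x^3*y) + b • curl2 (x*y^3))) 0))
      = (2*c00 + 2/3*c02) + (2*c10 - 2*b)*s + (2*c20)*s^2 + (-2*a)*s^3 := by
    intro s
    rw [int_key _ (c00 + c10*s + c20*s^2 - a*s^3) (c01 + c11*s) (c02 - 3*b*s) 0
      (fun t => by rw [hval0]; ring)]
    ring
  have inner1 : ∀ s : ℝ, (∫ t in (-1 : ℝ)..1,
      eval ![s, t] ((v + (a • curl2 (x^3*y) + b • curl2 (x*y^3))) 1))
      = (2*d00 + 2/3*d02) + (2*d10)*s + (2*d20)*s^2 + (0:ℝ)*s^3 := by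
    intro s
    rw [int_key _ (d00 + d10*s + d20*s^2) (d01 + d11*s + 3*a*s^2) d02 b
      (fun t => by rw [hval1]; ring)]
    ring
  rw [int_key _ (2*c00 + 2/3*c02) (2*c10 - 2*b) (2*c20) (-2*a) inner0] at hint0
  rw [int_key _ (2*d00 + 2/3*d02) (2*d10) (2*d20) 0 inner1] at hint1
  -- solve the linear system
  norm_num at V1 V2 V3 V4 W1 W2 W3 W4 E1 E2 F1 F2 hint0 hint1
  have hb : b = 0 := by linarith only [V1, V2, V3, V4, E1, E2]
  have ha : a = 0 := by linarith only [W1, W2, W3, W4, F1, F2]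
  have h1 : c00 = 0 := by linarith only [V1, V2, V3, V4, E1, E2, hint0]
  have h2 : c10 = 0 := by linarith only [V1, V2, V3, V4, ha, hb]
  have h3 : c01 = 0 := by linarith only [V1, V2, V3, V4]
  have h4 : c20 = 0 := by linarith only [V1, V2, V3, V4, E1, E2, hint0]
  have h5 : c11 = 0 := by linarith only [V1, V2, V3, V4]
  have h6 : c02 = 0 := by linarith only [V1, V2, V3, V4, E1, E2]
  have g1 : d00 = 0 := by linarith only [W1, W2, W3, W4, F1, F2, hint1]
  have g2 : d10 = 0 := by linarith only [W1, W2, W3, W4]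
  have g3 : d01 = 0 := by linarith only [W1, W2, W3, W4, ha, hb]
  have g4 : d20 = 0 := by linarith only [W1, W2, W3, W4, F1, F2, hint1]
  have g5 : d11 = 0 := by linarith only [W1, W2, W3, W4]
  have g6 : d02 = 0 := by linarith only [W1, W2, W3, W4, F1, F2, hint1]
  funext i
  fin_cases i
  · show (v + (a • curl2 (x^3*y) + b • curl2 (x*y^3))) 0 = 0
    rw [hcomp0, hq0, h1, h2, h3, h4, h5, h6, ha, hb]
    simp
  · show (v + (a • curl2 (x^3*y) + b • curl2 (x*y^3))) 1 = 0
    rw [hcomp1, hq1, g1, g2, g3, g4, g5, g6, ha, hb]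
    simp
end
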